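/- Fix ε > 0 and let n ≥ 2. Let G be the complete graph on the n^2 vertices v_{i,j}, 1 ≤ i,j ≤ n, with edge weights w(v_{i,j} v_{k,ℓ}) = 1+ε if j = ℓ and 1 otherwise, and let S = { v_{1,j} : 1 ≤ j ≤ n }. Then: (i) the edge-first greedy algorithm (process the edges in decreasing weight order, adding an edge unless it would create a component containing two vertices of S) returns exactly the disjoint union of the n column cliques { v_{i,j} : 1 ≤ i ≤ n }, whose total weight is n·binom(n,2)·(1+ε) ∼ n^3(1+ε)/2; (ii) if R is the set of all edges incident to at least one vertex of S∖{v_{1,1}}, then removing R leaves no two vertices of S in the same component, the total weight of R is binom(n−1,2) + (n−1)(n^2 − (n−1)) + (n−1)^2 ε ∼ n^3, and the remaining graph G_R has total weight binom(n^2,2) + binom(n,2) n ε − w(R) ∼ n^4/2. Consequently, the weight of the graph retained by the valid solution G_R exceeds the weight retained by the greedy algorithm by a factor asymptotic to n/(1+ε). -/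

import Mathlib

open Filter SimpleGraph Asymptotics
open scoped Topology

noncomputable section

attribute [local instance] Classical.propDecidable

/-- The number of vertex pairs among `n` vertices. -/
def numPairs (n : ℕ) : ℕ := n.choose 2

/-- A sequence of `n.choose 2` unordered pairs of vertices. -/
abbrev EdgeSeq (n : ℕ) := Fin (numPairs n) → Sym2 (Fin n)

/-- Orderings of all non-diagonal vertex pairs. -/
def edgeOrderings (n : ℕ) : Finset (EdgeSeq n) :=
  Finset.univ.filter fun f => Function.Injective f ∧ ∀ i, ¬ (f i).IsDiag

/-- The sample space: a uniformly random ordering of all pairs together with a uniformly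
random set of `k` special vertices. -/
def sample (n k : ℕ) : Finset (EdgeSeq n × Finset (Fin n)) :=
  (edgeOrderings n) ×ˢ (Finset.univ.powersetCard k)

/-- Probability of the event `A` over a random ordering and a random special set. -/
def Pr (n k : ℕ) (A : EdgeSeq n → Finset (Fin n) → Prop) : ℝ :=
  (((sample n k).filter fun p => A p.1 p.2).card : ℝ) / ((sample n k).card : ℝ)

/-- Probability of the event `A` over a random ordering only. -/
def PrOrd (n : ℕ) (A : EdgeSeq n → Prop) : ℝ :=
  (((edgeOrderings n).filter A).card : ℝ) / ((edgeOrderings n).card : ℝ)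

/-- `A` holds asymptotically almost surely. -/
def AAS (k : ℕ → ℕ) (A : (n : ℕ) → EdgeSeq n → Finset (Fin n) → Prop) : Prop :=
  Tendsto (fun n => Pr n (k n) (A n)) atTop (nhds 1)

variable {V : Type*}

/-- Add the pair `e` as an edge. -/
def addEdge (G : SimpleGraph V) (e : Sym2 V) : SimpleGraph V :=
  SimpleGraph.fromEdgeSet (insert e G.edgeSet)

/-- Adding `e` to `G` would join two components, each containing a special vertex. -/
def collides (S : Finset V) (G : SimpleGraph V) (e : Sym2 V) : Prop :=
  ∃ u v : V, e = s(u, v) ∧ ¬ G.Reachable u v ∧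
    (∃ a ∈ S, G.Reachable u a) ∧ (∃ b ∈ S, G.Reachable v b)

/-- One step of the constrained process. -/
def hatStep (S : Finset V) (G : SimpleGraph V) (e : Sym2 V) : SimpleGraph V :=
  if collides S G e then G else addEdge G e

/-- The constrained graph built greedily from a list of pairs: each pair is added in turn
unless it would put two special vertices in the same component. -/
def hatList (S : Finset V) (l : List (Sym2 V)) : SimpleGraph V :=
  l.foldl (hatStep S) ⊥

/-- The graph `Ĝ_k(n,m)` of the constrained process. -/
def hatG {n : ℕ} (S : Finset (Fin n)) (f : EdgeSeq n) (m : ℕ) : SimpleGraph (Fin n) :=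
  hatList S ((List.ofFn f).take m)

/-- The graph `G(n,m)` of the Erdős–Rényi process. -/
def gnm {n : ℕ} (f : EdgeSeq n) (m : ℕ) : SimpleGraph (Fin n) :=
  SimpleGraph.fromEdgeSet {e | ∃ i : Fin (numPairs n), (i : ℕ) < m ∧ f i = e}

/-- The number of vertices of the connected component `C`. -/
def compSize [Fintype V] (G : SimpleGraph V) (C : G.ConnectedComponent) : ℕ :=
  (Finset.univ.filter fun v => G.connectedComponentMk v = C).card

/-- The components of `G`, as a `Finset`. -/
def components [Fintype V] (G : SimpleGraph V) : Finset G.ConnectedComponent :=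
  Finset.univ.image G.connectedComponentMk

/-- The number of connected components of `G`. -/
def numComponents [Fintype V] (G : SimpleGraph V) : ℕ := (components G).card

/-- The sizes of the components of `G`, sorted increasingly. -/
def compSizes [Fintype V] (G : SimpleGraph V) : List ℕ :=
  ((components G).val.map (compSize G)).sort (· ≤ ·)

/-- `L G i` is the size of the `i`-th largest component of `G` (`i = 1, 2, …`). -/
def L [Fintype V] (G : SimpleGraph V) (i : ℕ) : ℕ :=
  (compSizes G).reverse.getD (i - 1) 0

/-- A component is special if it contains a special vertex. -/
def specialComp (S : Finset V) (G : SimpleGraph V) (C : G.ConnectedComponent) : Prop :=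
  ∃ v ∈ S, G.connectedComponentMk v = C

/-- The sizes of the special components of `G`, sorted increasingly. -/
def specialCompSizes [Fintype V] (S : Finset V) (G : SimpleGraph V) : List ℕ :=
  (((components G).filter (specialComp S G)).val.map (compSize G)).sort (· ≤ ·)

/-- `Lhat S G i` is the size of the `i`-th largest special component of `G`. -/
def Lhat [Fintype V] (S : Finset V) (G : SimpleGraph V) (i : ℕ) : ℕ :=
  (specialCompSizes S G).reverse.getD (i - 1) 0

/-- The number of edges of `G`. -/
def numEdges [Fintype V] (G : SimpleGraph V) : ℕ :=
  (Finset.univ.filter fun e : Sym2 V => e ∈ G.edgeSet).card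

/-- `M(n,k)`: the number of edges at the end of the constrained process. -/
def Mfinal {n : ℕ} (S : Finset (Fin n)) (f : EdgeSeq n) : ℕ :=
  numEdges (hatG S f (numPairs n))

/-- `M̂(n,k)`: the first time at which the constrained process has exactly `k` components. -/
def Mhat {n : ℕ} (k : ℕ) (S : Finset (Fin n)) (f : EdgeSeq n) : ℕ :=
  sInf {m : ℕ | numComponents (hatG S f m) = k}

end

noncomputable section
attribute [local instance] Classical.propDecidable

/-- The weight of a pair of vertices of `K_{n²}`: `1 + ε` if the two vertices lie in the
same column, and `1` otherwise. -/
def wt (ε : ℝ) {n : ℕ} (e : Sym2 (Fin n × Fin n)) : ℝ :=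
  if (e.map Prod.snd).IsDiag then 1 + ε else 1

/-- The set `S = {v_{1,j} : 1 ≤ j ≤ n}` (the first row). -/
def Srow (n : ℕ) : Finset (Fin n × Fin n) :=
  Finset.univ.filter fun v => (v.1 : ℕ) = 0

/-- The total weight of the edges of `G`. -/
def wsum (ε : ℝ) {n : ℕ} (G : SimpleGraph (Fin n × Fin n)) : ℝ :=
  ∑ e ∈ Finset.univ.filter (fun e : Sym2 (Fin n × Fin n) => e ∈ G.edgeSet), wt ε e

/-- The disjoint union of the `n` column cliques. -/
def Gcol (n : ℕ) : SimpleGraph (Fin n × Fin n) :=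
  SimpleGraph.fromRel fun a b => a.2 = b.2

/-- The set `R` of all pairs incident to at least one vertex of `S ∖ {v_{1,1}}`. -/
def Rset (n : ℕ) : Set (Sym2 (Fin n × Fin n)) :=
  {e | ¬ e.IsDiag ∧ ∃ v ∈ e, (v.1 : ℕ) = 0 ∧ (v.2 : ℕ) ≠ 0}

/-- The graph `G_R` obtained from `K_{n²}` by removing the edges of `R`. -/
def GR (n : ℕ) : SimpleGraph (Fin n × Fin n) :=
  SimpleGraph.fromEdgeSet {e | ¬ e.IsDiag ∧ e ∉ Rset n}

/-- The total weight of `R`. -/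
def wR (ε : ℝ) (n : ℕ) : ℝ :=
  ∑ e ∈ Finset.univ.filter (fun e : Sym2 (Fin n × Fin n) => e ∈ Rset n), wt ε e

-- ### auxiliary lemmas

lemma two_mul_choose_two' (k : ℕ) : 2 * (k+1).choose 2 = (k+1) * k := by
  induction k with
  | zero => rfl
  | succ j ih =>
    rw [Nat.choose_succ_succ (j+1) 1, Nat.mul_add, ih, Nat.choose_one_right]
    ring

lemma two_mul_choose_two (k : ℕ) : 2 * k.choose 2 = k * (k-1) := by
  cases k with
  | zero => rfl
  | succ j => rw [two_mul_choose_two' j]; simp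

lemma sum_wt (ε : ℝ) {n : ℕ} (A : Finset (Sym2 (Fin n × Fin n))) :
    ∑ e ∈ A, wt ε e = (A.card : ℝ)
      + ε * ((A.filter fun e => (Sym2.map Prod.snd e).IsDiag).card : ℝ) := by
  classical
  rw [← Finset.sum_filter_add_sum_filter_not A (fun e => (Sym2.map Prod.snd e).IsDiag)]
  have e1 : ∑ e ∈ A.filter (fun e => (Sym2.map Prod.snd e).IsDiag), wt ε e
      = ((A.filter (fun e => (Sym2.map Prod.snd e).IsDiag)).card : ℝ) * (1+ε) := by
    rw [Finset.sum_eq_card_nsmul (fun e he => by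
      simp only [wt, if_pos (Finset.mem_filter.mp he).2] : ∀ e ∈ _, wt ε e = 1 + ε)]
    rw [nsmul_eq_mul]
  have e2 : ∑ e ∈ A.filter (fun e => ¬(Sym2.map Prod.snd e).IsDiag), wt ε e
      = ((A.filter (fun e => ¬(Sym2.map Prod.snd e).IsDiag)).card : ℝ) := by
    rw [Finset.sum_eq_card_nsmul (fun e he => by
      simp only [wt, if_neg (Finset.mem_filter.mp he).2] : ∀ e ∈ _, wt ε e = 1)]
    rw [nsmul_eq_mul, mul_one]
  rw [e1, e2]
  have hc := Finset.card_filter_add_card_filter_not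
    (s := A) (p := fun e => (Sym2.map Prod.snd e).IsDiag)
  have : ((A.filter fun e => (Sym2.map Prod.snd e).IsDiag).card : ℝ)
      + ((A.filter fun e => ¬(Sym2.map Prod.snd e).IsDiag).card : ℝ) = (A.card : ℝ) := by
    exact_mod_cast congrArg Nat.cast hc
  linarith [this]

lemma gcol_adj {n : ℕ} {a b : Fin n × Fin n} :
    (Gcol n).Adj a b ↔ a ≠ b ∧ a.2 = b.2 := by
  rw [Gcol, SimpleGraph.fromRel_adj]
  constructor
  · rintro ⟨h1, h2 | h2⟩ <;> exact ⟨h1, by omega⟩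
  · rintro ⟨h1, h2⟩; exact ⟨h1, Or.inl h2⟩

lemma mem_edgeSet_gcol {n : ℕ} {e : Sym2 (Fin n × Fin n)} :
    e ∈ (Gcol n).edgeSet ↔ ¬ e.IsDiag ∧ (Sym2.map Prod.snd e).IsDiag := by
  induction e using Sym2.ind with
  | _ a b => simp [SimpleGraph.mem_edgeSet, gcol_adj, Sym2.map_pair_eq]

lemma card_col {n : ℕ} (j : Fin n) :
    (Finset.univ.filter fun u : Fin n × Fin n => u.2 = j).card = n := by
  have h : (Finset.univ.filter fun u : Fin n × Fin n => u.2 = j)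
      = Finset.univ ×ˢ {j} := by
    ext u
    constructor
    · intro hu
      exact Finset.mem_product.mpr ⟨Finset.mem_univ _, by
        simpa using (Finset.mem_filter.mp hu).2⟩
    · intro hu
      exact Finset.mem_filter.mpr ⟨Finset.mem_univ _, by
        simpa using (Finset.mem_product.mp hu).2⟩
  rw [h, Finset.card_product]; simp

lemma handshake {n : ℕ} (s : Set (Sym2 (Fin n × Fin n))) [DecidablePred (· ∈ s)]
    (hnd : ∀ e ∈ s, ¬ e.IsDiag)
    (d : Fin n × Fin n → ℕ)
    (hdeg : ∀ v, (Finset.univ.filter fun u => s(v, u) ∈ s ∧ v ≠ u).card = d v)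
    (c : ℕ) (hsum : ∑ v, d v = 2 * c) :
    (Finset.univ.filter fun e : Sym2 (Fin n × Fin n) => e ∈ s).card = c := by
  classical
  set G := SimpleGraph.fromEdgeSet s with hG
  have hfe : (Finset.univ.filter fun e : Sym2 (Fin n × Fin n) => e ∈ s) = G.edgeFinset := by
    ext e
    simp only [Finset.mem_filter, Finset.mem_univ, true_and, SimpleGraph.mem_edgeFinset,
      hG, SimpleGraph.edgeSet_fromEdgeSet, Set.mem_diff, Set.mem_setOf_eq]
    exact ⟨fun h => ⟨h, hnd e h⟩, fun h => h.1⟩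
  have hdeg' : ∀ v, G.degree v = d v := by
    intro v
    rw [← hdeg v, ← SimpleGraph.card_neighborFinset_eq_degree,
      SimpleGraph.neighborFinset_eq_filter]
    congr 1
  have h2 := G.sum_degrees_eq_twice_card_edges
  rw [Finset.sum_congr rfl (fun v _ => hdeg' v), hsum] at h2
  rw [hfe]
  have h2' : 2 * c = 2 * G.edgeFinset.card := by convert h2 using 3; congr!
  omega

-- counting lemmas
section
variable {n : ℕ}

abbrev Pv {n : ℕ} (v : Fin n × Fin n) : Prop := (v.1 : ℕ) = 0 ∧ (v.2 : ℕ) ≠ 0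

lemma mem_Rset_mk {a b : Fin n × Fin n} :
    s(a, b) ∈ Rset n ↔ a ≠ b ∧ (Pv a ∨ Pv b) := by
  rw [Rset]
  simp only [Set.mem_setOf_eq, Sym2.mk_isDiag_iff, Sym2.mem_iff]
  constructor
  · rintro ⟨hne, v, (rfl | rfl), hv⟩
    · exact ⟨hne, Or.inl hv⟩
    · exact ⟨hne, Or.inr hv⟩
  · rintro ⟨hne, hv | hv⟩
    · exact ⟨hne, a, Or.inl rfl, hv⟩
    · exact ⟨hne, b, Or.inr rfl, hv⟩

lemma card_edges_gcol (hn : 1 ≤ n) :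
    (Finset.univ.filter fun e : Sym2 (Fin n × Fin n) => e ∈ (Gcol n).edgeSet).card
      = n * n.choose 2 := by
  apply handshake _ (fun e he => (Gcol n).not_isDiag_of_mem_edgeSet he) (fun _ => n - 1)
  · intro v
    have h : (Finset.univ.filter fun u => s(v, u) ∈ (Gcol n).edgeSet ∧ v ≠ u)
        = (Finset.univ.filter fun u : Fin n × Fin n => u.2 = v.2).erase v := by
      ext u
      simp only [Finset.mem_filter, Finset.mem_univ, true_and, SimpleGraph.mem_edgeSet,
        gcol_adj, Finset.mem_erase]
      constructor
      · rintro ⟨⟨h1, h2⟩, h3⟩; exact ⟨Ne.symm h3, h2.symm⟩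
      · rintro ⟨h1, h2⟩; exact ⟨⟨Ne.symm h1, h2.symm⟩, Ne.symm h1⟩
    rw [h, Finset.card_erase_of_mem (by simp), card_col]
  · rw [Finset.sum_const, smul_eq_mul, Finset.card_univ, Fintype.card_prod, Fintype.card_fin]
    have h2 := two_mul_choose_two n
    calc n * n * (n - 1) = n * (2 * n.choose 2) := by rw [h2]; ring
    _ = 2 * (n * n.choose 2) := by ring

lemma card_T (hn : 2 ≤ n) :
    (Finset.univ.filter fun u : Fin n × Fin n => Pv u).card = n - 1 := by
  have z : Fin n := ⟨0, by omega⟩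
  have h : (Finset.univ.filter fun u : Fin n × Fin n => Pv u)
      = {(⟨0, by omega⟩ : Fin n)} ×ˢ (Finset.univ.erase ⟨0, by omega⟩) := by
    ext u
    simp only [Finset.mem_filter, Finset.mem_univ, true_and, Finset.mem_product,
      Finset.mem_singleton, Finset.mem_erase, and_true]
    constructor
    · rintro ⟨h1, h2⟩
      exact ⟨Fin.ext h1, fun hc => h2 (by rw [hc])⟩
    · rintro ⟨h1, h2⟩
      exact ⟨by rw [h1], fun hc => h2 (Fin.ext hc)⟩
  rw [h, Finset.card_product, Finset.card_singleton, Finset.card_erase_of_mem (by simp),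
    Finset.card_univ, Fintype.card_fin, one_mul]

lemma card_edges_R (hn : 2 ≤ n) :
    (Finset.univ.filter fun e : Sym2 (Fin n × Fin n) => e ∈ Rset n).card
      = (n - 1).choose 2 + (n - 1) * (n ^ 2 - (n - 1)) := by
  apply handshake _ (fun e he => he.1) (fun v => if Pv v then n ^ 2 - 1 else n - 1)
  · intro v
    by_cases hv : Pv v
    · rw [if_pos hv]
      have h : (Finset.univ.filter fun u => s(v, u) ∈ Rset n ∧ v ≠ u)
          = Finset.univ.erase v := by
        ext u
        simp only [Finset.mem_filter, Finset.mem_univ, true_and, mem_Rset_mk,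
          Finset.mem_erase, and_true]
        constructor
        · rintro ⟨h1, h2⟩; exact Ne.symm h2
        · intro h1; exact ⟨⟨Ne.symm h1, Or.inl hv⟩, Ne.symm h1⟩
      rw [h, Finset.card_erase_of_mem (by simp), Finset.card_univ, Fintype.card_prod,
        Fintype.card_fin, pow_two]
    · rw [if_neg hv]
      have h : (Finset.univ.filter fun u => s(v, u) ∈ Rset n ∧ v ≠ u)
          = Finset.univ.filter fun u : Fin n × Fin n => Pv u := by
        ext u
        simp only [Finset.mem_filter, Finset.mem_univ, true_and, mem_Rset_mk]
        constructor
        · rintro ⟨⟨h1, h2 | h2⟩, h3⟩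
          · exact absurd h2 hv
          · exact h2
        · intro h1
          have hne : v ≠ u := by rintro rfl; exact hv h1
          exact ⟨⟨hne, Or.inr h1⟩, hne⟩
      rw [h, card_T hn]
  · rw [Finset.sum_ite, Finset.sum_const, Finset.sum_const, smul_eq_mul, smul_eq_mul,
      card_T hn]
    have hc : (Finset.univ.filter fun v : Fin n × Fin n => ¬ Pv v).card
        = n * n - (n - 1) := by
      have := Finset.card_filter_add_card_filter_not
        (s := (Finset.univ : Finset (Fin n × Fin n))) (p := fun v => Pv v)
      rw [card_T hn, Finset.card_univ, Fintype.card_prod, Fintype.card_fin] at this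
      omega
    rw [hc, Nat.mul_add 2]
    obtain ⟨p, rfl⟩ : ∃ p, n = p + 2 := ⟨n - 2, by omega⟩
    have e1 : p + 2 - 1 = p + 1 := by omega
    rw [e1, two_mul_choose_two' p]
    have e2 : (p + 2) ^ 2 = p * p + 4 * p + 4 := by ring
    have e3 : (p + 2) * (p + 2) = p * p + 4 * p + 4 := by ring
    rw [e2, e3]
    have e4 : p * p + 4 * p + 4 - 1 = p * p + 4 * p + 3 := by omega
    have e5 : p * p + 4 * p + 4 - (p + 1) = p * p + 3 * p + 3 := by omega
    rw [e4, e5]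
    ring

lemma card_edges_Rcol (hn : 2 ≤ n) :
    (Finset.univ.filter fun e : Sym2 (Fin n × Fin n) =>
      e ∈ Rset n ∧ (Sym2.map Prod.snd e).IsDiag).card = (n - 1) ^ 2 := by
  apply handshake (s := {e | e ∈ Rset n ∧ (Sym2.map Prod.snd e).IsDiag})
    (fun e he => he.1.1)
    (fun v => (if Pv v then n - 1 else 0) + (if (v.1 : ℕ) ≠ 0 ∧ (v.2 : ℕ) ≠ 0 then 1 else 0))
  · intro v
    by_cases hv : Pv v
    · rw [if_pos hv, if_neg (by simp [Pv] at hv; simp [hv.1])]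
      have h : (Finset.univ.filter fun u =>
            s(v, u) ∈ {e | e ∈ Rset n ∧ (Sym2.map Prod.snd e).IsDiag} ∧ v ≠ u)
          = (Finset.univ.filter fun u : Fin n × Fin n => u.2 = v.2).erase v := by
        ext u
        simp only [Finset.mem_filter, Finset.mem_univ, true_and, Set.mem_setOf_eq,
          mem_Rset_mk, Sym2.map_pair_eq, Sym2.mk_isDiag_iff, Finset.mem_erase]
        constructor
        · rintro ⟨⟨⟨h1, h2⟩, h3⟩, h4⟩; exact ⟨Ne.symm h4, h3.symm⟩
        · rintro ⟨h1, h2⟩; exact ⟨⟨⟨Ne.symm h1, Or.inl hv⟩, h2.symm⟩, Ne.symm h1⟩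
      rw [h, Finset.card_erase_of_mem (by simp), card_col, add_zero]
    · rw [if_neg hv]
      by_cases hv2 : (v.2 : ℕ) = 0
      · rw [if_neg (by simp [hv2])]
        have h : (Finset.univ.filter fun u =>
              s(v, u) ∈ {e | e ∈ Rset n ∧ (Sym2.map Prod.snd e).IsDiag} ∧ v ≠ u)
            = ∅ := by
          ext u
          simp only [Finset.mem_filter, Finset.mem_univ, true_and, Set.mem_setOf_eq,
            mem_Rset_mk, Sym2.map_pair_eq, Sym2.mk_isDiag_iff, Finset.notMem_empty,
            iff_false]
          rintro ⟨⟨⟨h1, h2 | h2⟩, h3⟩, h4⟩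
          · exact hv h2
          · exact h2.2 (h3 ▸ hv2)
        rw [h, Finset.card_empty]
      · have hv1 : (v.1 : ℕ) ≠ 0 := fun h => hv ⟨h, hv2⟩
        rw [if_pos ⟨hv1, hv2⟩]
        have h : (Finset.univ.filter fun u =>
              s(v, u) ∈ {e | e ∈ Rset n ∧ (Sym2.map Prod.snd e).IsDiag} ∧ v ≠ u)
            = {((⟨0, by omega⟩ : Fin n), v.2)} := by
          ext u
          simp only [Finset.mem_filter, Finset.mem_univ, true_and, Set.mem_setOf_eq,
            mem_Rset_mk, Sym2.map_pair_eq, Sym2.mk_isDiag_iff, Finset.mem_singleton]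
          constructor
          · rintro ⟨⟨⟨h1, h2 | h2⟩, h3⟩, h4⟩
            · exact absurd h2 hv
            · have : u.1 = (⟨0, by omega⟩ : Fin n) := Fin.ext h2.1
              exact Prod.ext this h3.symm
          · rintro rfl
            have hne : v ≠ ((⟨0, by omega⟩ : Fin n), v.2) := by
              intro hcon
              exact hv1 (by rw [hcon])
            exact ⟨⟨⟨hne, Or.inr ⟨rfl, hv2⟩⟩, rfl⟩, hne⟩
        rw [h, Finset.card_singleton, zero_add]
  · rw [Finset.sum_add_distrib, Finset.sum_ite, Finset.sum_ite, Finset.sum_const,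
      Finset.sum_const, Finset.sum_const, Finset.sum_const, card_T hn]
    have hB : (Finset.univ.filter fun v : Fin n × Fin n =>
          (v.1 : ℕ) ≠ 0 ∧ (v.2 : ℕ) ≠ 0).card = (n - 1) * (n - 1) := by
      have h : (Finset.univ.filter fun v : Fin n × Fin n =>
            (v.1 : ℕ) ≠ 0 ∧ (v.2 : ℕ) ≠ 0)
          = (Finset.univ.erase (⟨0, by omega⟩ : Fin n))
              ×ˢ (Finset.univ.erase (⟨0, by omega⟩ : Fin n)) := by
        ext u
        simp only [Finset.mem_filter, Finset.mem_univ, true_and, Finset.mem_product,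
          Finset.mem_erase, and_true]
        constructor
        · rintro ⟨h1, h2⟩
          exact ⟨fun hc => h1 (by rw [hc]), fun hc => h2 (by rw [hc])⟩
        · rintro ⟨h1, h2⟩
          exact ⟨fun hc => h1 (Fin.ext hc), fun hc => h2 (Fin.ext hc)⟩
      rw [h, Finset.card_product, Finset.card_erase_of_mem (by simp),
        Finset.card_univ, Fintype.card_fin]
    rw [hB]
    simp only [smul_eq_mul, mul_zero, mul_one, add_zero]
    generalize n - 1 = m
    ring

lemma card_nondiag (n : ℕ) :
    (Finset.univ.filter fun e : Sym2 (Fin n × Fin n) => ¬ e.IsDiag).card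
      = (n ^ 2).choose 2 := by
  classical
  have h : (Finset.univ.filter fun e : Sym2 (Fin n × Fin n) => ¬ e.IsDiag)
      = (⊤ : SimpleGraph (Fin n × Fin n)).edgeFinset := by
    ext e
    simp [SimpleGraph.mem_edgeFinset, SimpleGraph.edgeSet_top]
  rw [h]
  have := SimpleGraph.card_edgeFinset_top_eq_card_choose_two (V := Fin n × Fin n)
  rw [Fintype.card_prod, Fintype.card_fin] at this
  rw [← pow_two] at this
  convert this using 2

-- ### greedy lemmas
lemma reach_col {n : ℕ} {u v : Fin n × Fin n} (h : (Gcol n).Reachable u v) :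
    u.2 = v.2 := by
  obtain ⟨w⟩ := h
  induction w with
  | nil => rfl
  | cons h p ih => exact (gcol_adj.mp h).2.trans ih

lemma reach_in_col {n : ℕ} (hn : 2 ≤ n) (u : Fin n × Fin n) :
    (Gcol n).Reachable u ((⟨0, by omega⟩ : Fin n), u.2) := by
  by_cases h : u = ((⟨0, by omega⟩ : Fin n), u.2)
  · rw [← h]
  · exact SimpleGraph.Adj.reachable (gcol_adj.mpr ⟨h, rfl⟩)

lemma mem_Srow {n : ℕ} {v : Fin n × Fin n} : v ∈ Srow n ↔ (v.1 : ℕ) = 0 := by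
  simp [Srow]

lemma not_collides_col {n : ℕ} {G : SimpleGraph (Fin n × Fin n)} (hG : G ≤ Gcol n)
    {e : Sym2 (Fin n × Fin n)} (he : (Sym2.map Prod.snd e).IsDiag) :
    ¬ collides (Srow n) G e := by
  rintro ⟨u, v, rfl, hnr, ⟨a, ha, hua⟩, ⟨b, hb, hvb⟩⟩
  have huv : u.2 = v.2 := by
    rw [Sym2.map_pair_eq, Sym2.mk_isDiag_iff] at he; exact he
  have h1 : u.2 = a.2 := reach_col (hua.mono hG)
  have h2 : v.2 = b.2 := reach_col (hvb.mono hG)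
  have hab : a = b := by
    refine Prod.ext (Fin.ext ?_) ?_
    · rw [mem_Srow.mp ha, mem_Srow.mp hb]
    · rw [← h1, huv, h2]
  exact hnr (hua.trans (hab ▸ hvb).symm)

lemma edgeSet_addEdge {V' : Type*} {G : SimpleGraph V'} {e : Sym2 V'} (he : ¬ e.IsDiag) :
    (addEdge G e).edgeSet = insert e G.edgeSet := by
  rw [addEdge, SimpleGraph.edgeSet_fromEdgeSet]
  ext x
  simp only [Set.mem_diff, Set.mem_insert_iff, Set.mem_setOf_eq]
  constructor
  · exact fun h => h.1
  · rintro (rfl | h)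
    · exact ⟨Or.inl rfl, he⟩
    · exact ⟨Or.inr h, G.not_isDiag_of_mem_edgeSet h⟩

lemma foldl_phase1 {n : ℕ} (hn : 2 ≤ n) :
    ∀ (l : List (Sym2 (Fin n × Fin n))) (G : SimpleGraph (Fin n × Fin n)),
      G ≤ Gcol n → (∀ e ∈ l, ¬ e.IsDiag ∧ (Sym2.map Prod.snd e).IsDiag) →
      l.foldl (hatStep (Srow n)) G
        = SimpleGraph.fromEdgeSet (G.edgeSet ∪ {e | e ∈ l}) := by
  intro l
  induction l with
  | nil =>
    intro G hG _
    simp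
  | cons e l ih =>
    intro G hG hl
    have he := hl e List.mem_cons_self
    have hstep : hatStep (Srow n) G e = addEdge G e := by
      rw [hatStep, if_neg (not_collides_col hG he.2)]
    have hle : addEdge G e ≤ Gcol n := by
      rw [← SimpleGraph.edgeSet_subset_edgeSet, edgeSet_addEdge he.1]
      intro x hx
      rcases hx with rfl | hx
      · exact mem_edgeSet_gcol.mpr ⟨he.1, he.2⟩
      · exact (SimpleGraph.edgeSet_subset_edgeSet.mpr hG) hx
    rw [List.foldl_cons, hstep, ih (addEdge G e) hle (fun x hx => hl x (List.mem_cons_of_mem e hx))]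
    congr 1
    rw [edgeSet_addEdge he.1]
    ext x
    simp only [Set.mem_union, Set.mem_insert_iff, Set.mem_setOf_eq, List.mem_cons]
    tauto

lemma Gcol_eq_fromEdgeSet {n : ℕ} :
    SimpleGraph.fromEdgeSet {e : Sym2 (Fin n × Fin n) | ¬ e.IsDiag ∧ (Sym2.map Prod.snd e).IsDiag}
      = Gcol n := by
  ext a b
  rw [SimpleGraph.fromEdgeSet_adj, Set.mem_setOf_eq, ← mem_edgeSet_gcol,
    SimpleGraph.mem_edgeSet]
  constructor
  · exact fun h => h.1
  · exact fun h => ⟨h, h.ne⟩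

lemma collides_cross {n : ℕ} (hn : 2 ≤ n) {e : Sym2 (Fin n × Fin n)} (hd : ¬ e.IsDiag)
    (hc : ¬ (Sym2.map Prod.snd e).IsDiag) : collides (Srow n) (Gcol n) e := by
  induction e using Sym2.ind with
  | _ u v =>
    rw [Sym2.map_pair_eq, Sym2.mk_isDiag_iff] at hc
    refine ⟨u, v, rfl, fun hr => hc (reach_col hr), ⟨((⟨0, by omega⟩ : Fin n), u.2), ?_, reach_in_col hn u⟩,
      ⟨((⟨0, by omega⟩ : Fin n), v.2), ?_, reach_in_col hn v⟩⟩
    · exact mem_Srow.mpr rfl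
    · exact mem_Srow.mpr rfl

lemma foldl_phase2 {n : ℕ} (hn : 2 ≤ n) :
    ∀ (l : List (Sym2 (Fin n × Fin n))),
      (∀ e ∈ l, ¬ e.IsDiag ∧ ¬ (Sym2.map Prod.snd e).IsDiag) →
      l.foldl (hatStep (Srow n)) (Gcol n) = Gcol n := by
  intro l
  induction l with
  | nil => intro _; simp
  | cons e l ih =>
    intro hl
    have he := hl e List.mem_cons_self
    rw [List.foldl_cons, hatStep, if_pos (collides_cross hn he.1 he.2)]
    exact ih (fun x hx => hl x (List.mem_cons_of_mem e hx))

lemma sorted_split {ε : ℝ} (hε : 0 < ε) {n : ℕ} :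
    ∀ (l : List (Sym2 (Fin n × Fin n))),
      l.Pairwise (fun e₁ e₂ => wt ε e₂ ≤ wt ε e₁) →
      ∃ l₁ l₂, l = l₁ ++ l₂ ∧ (∀ e ∈ l₁, (Sym2.map Prod.snd e).IsDiag)
        ∧ (∀ e ∈ l₂, ¬ (Sym2.map Prod.snd e).IsDiag) := by
  intro l
  induction l with
  | nil => exact fun _ => ⟨[], [], rfl, by simp, by simp⟩
  | cons e l ih =>
    intro hs
    rw [List.pairwise_cons] at hs
    by_cases hq : (Sym2.map Prod.snd e).IsDiag
    · obtain ⟨l₁, l₂, rfl, h1, h2⟩ := ih hs.2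
      refine ⟨e :: l₁, l₂, rfl, ?_, h2⟩
      intro x hx
      rcases List.mem_cons.mp hx with rfl | hx
      · exact hq
      · exact h1 x hx
    · refine ⟨[], e :: l, rfl, by simp, ?_⟩
      intro x hx
      rcases List.mem_cons.mp hx with rfl | hx
      · exact hq
      · intro hqx
        have hle := hs.1 x hx
        rw [wt, if_pos hqx, wt, if_neg hq] at hle
        linarith

lemma greedy_result {ε : ℝ} (hε : 0 < ε) {n : ℕ} (hn : 2 ≤ n)
    (l : List (Sym2 (Fin n × Fin n)))
    (hmem : ∀ e, e ∈ l ↔ ¬ e.IsDiag)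
    (hsort : l.Pairwise (fun e₁ e₂ => wt ε e₂ ≤ wt ε e₁)) :
    hatList (Srow n) l = Gcol n := by
  obtain ⟨l₁, l₂, rfl, h1, h2⟩ := sorted_split hε l hsort
  rw [hatList, List.foldl_append]
  have hmem1 : ∀ e ∈ l₁, ¬ e.IsDiag ∧ (Sym2.map Prod.snd e).IsDiag :=
    fun e he => ⟨(hmem e).mp (List.mem_append_left l₂ he), h1 e he⟩
  rw [foldl_phase1 hn l₁ ⊥ bot_le hmem1]
  have hset : (⊥ : SimpleGraph (Fin n × Fin n)).edgeSet ∪ {e | e ∈ l₁}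
      = {e : Sym2 (Fin n × Fin n) | ¬ e.IsDiag ∧ (Sym2.map Prod.snd e).IsDiag} := by
    rw [SimpleGraph.edgeSet_bot, Set.empty_union]
    ext e
    simp only [Set.mem_setOf_eq]
    constructor
    · exact fun he => ⟨(hmem1 e he).1, (hmem1 e he).2⟩
    · rintro ⟨hd, hq⟩
      rcases List.mem_append.mp ((hmem e).mpr hd) with he | he
      · exact he
      · exact absurd hq (h2 e he)
  rw [hset, Gcol_eq_fromEdgeSet]
  exact foldl_phase2 hn l₂ (fun e he => ⟨(hmem e).mp (List.mem_append_right l₁ he), h2 e he⟩)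

-- ### GR validity
lemma isolated_reach {V' : Type*} {G : SimpleGraph V'} {a b : V'}
    (h : ∀ u, ¬ G.Adj a u) (hr : G.Reachable a b) : a = b := by
  obtain ⟨w⟩ := hr
  cases w with
  | nil => rfl
  | cons hadj p => exact absurd hadj (h _)

lemma Pv_isolated {n : ℕ} {a : Fin n × Fin n} (ha : Pv a) (u : Fin n × Fin n) :
    ¬ (GR n).Adj a u := by
  rw [GR, SimpleGraph.fromEdgeSet_adj]
  rintro ⟨⟨hd, hR⟩, hne⟩
  exact hR (mem_Rset_mk.mpr ⟨hne, Or.inl ha⟩)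

lemma GR_valid {n : ℕ} (hn : 2 ≤ n) :
    ∀ a ∈ Srow n, ∀ b ∈ Srow n, a ≠ b → ¬ (GR n).Reachable a b := by
  intro a ha b hb hab hr
  rw [mem_Srow] at ha hb
  have hne2 : a.2 ≠ b.2 := by
    intro h
    exact hab (Prod.ext (Fin.ext (by rw [ha, hb])) h)
  by_cases h2 : (a.2 : ℕ) = 0
  · have hb2 : (b.2 : ℕ) ≠ 0 := fun h => hne2 (Fin.ext (by rw [h2, h]))
    exact hab (isolated_reach (Pv_isolated ⟨hb, hb2⟩) hr.symm).symm
  · exact hab (isolated_reach (Pv_isolated ⟨ha, h2⟩) hr)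

-- ### weights
lemma wsum_Gcol (ε : ℝ) {n : ℕ} (hn : 2 ≤ n) :
    wsum ε (Gcol n) = (n : ℝ) * (n.choose 2 : ℝ) * (1 + ε) := by
  rw [wsum, sum_wt]
  rw [Finset.filter_eq_self.mpr (fun e he => (mem_edgeSet_gcol.mp (Finset.mem_filter.mp he).2).2)]
  rw [card_edges_gcol (by omega)]
  push_cast
  ring

lemma wR_sum (ε : ℝ) {n : ℕ} (hn : 2 ≤ n) :
    wR ε n = (((n - 1).choose 2 + (n - 1) * (n ^ 2 - (n - 1)) : ℕ) : ℝ)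
      + ε * (((n - 1) ^ 2 : ℕ) : ℝ) := by
  rw [wR, sum_wt, Finset.filter_filter, card_edges_R hn, card_edges_Rcol hn]

lemma wR_closed (ε : ℝ) {n : ℕ} (hn : 2 ≤ n) :
    wR ε n = ((n - 1).choose 2 : ℝ) + ((n : ℝ) - 1) * ((n : ℝ) ^ 2 - ((n : ℝ) - 1))
      + ((n : ℝ) - 1) ^ 2 * ε := by
  rw [wR_sum ε hn]
  have h1 : (1 : ℕ) ≤ n := by omega
  have h2 : n - 1 ≤ n ^ 2 := by nlinarith [Nat.sub_le n 1]
  push_cast [Nat.cast_sub h1, Nat.cast_sub h2]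
  ring

lemma wsum_GR (ε : ℝ) {n : ℕ} (hn : 2 ≤ n) :
    wsum ε (GR n) = (((n ^ 2).choose 2 : ℕ) : ℝ) + (n.choose 2 : ℝ) * (n : ℝ) * ε
      - wR ε n := by
  have hFGR : (Finset.univ.filter fun e : Sym2 (Fin n × Fin n) => e ∈ (GR n).edgeSet)
      = (Finset.univ.filter fun e : Sym2 (Fin n × Fin n) => ¬ e.IsDiag)
        \ (Finset.univ.filter fun e : Sym2 (Fin n × Fin n) => e ∈ Rset n) := by
    ext e
    simp only [Finset.mem_filter, Finset.mem_univ, true_and, Finset.mem_sdiff, GR,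
      SimpleGraph.edgeSet_fromEdgeSet, Set.mem_diff, Set.mem_setOf_eq]
    tauto
  have hsub : (Finset.univ.filter fun e : Sym2 (Fin n × Fin n) => e ∈ Rset n)
      ⊆ (Finset.univ.filter fun e : Sym2 (Fin n × Fin n) => ¬ e.IsDiag) := by
    intro e he
    simp only [Finset.mem_filter, Finset.mem_univ, true_and] at *
    exact he.1
  have hFGRcol : ((Finset.univ.filter fun e : Sym2 (Fin n × Fin n) => e ∈ (GR n).edgeSet).filter
        fun e => (Sym2.map Prod.snd e).IsDiag)
      = (Finset.univ.filter fun e : Sym2 (Fin n × Fin n) => e ∈ (Gcol n).edgeSet)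
        \ (Finset.univ.filter fun e : Sym2 (Fin n × Fin n) =>
            e ∈ Rset n ∧ (Sym2.map Prod.snd e).IsDiag) := by
    ext e
    simp only [Finset.mem_filter, Finset.mem_univ, true_and, Finset.mem_sdiff, GR,
      SimpleGraph.edgeSet_fromEdgeSet, Set.mem_diff, Set.mem_setOf_eq, mem_edgeSet_gcol]
    tauto
  have hsubcol : (Finset.univ.filter fun e : Sym2 (Fin n × Fin n) =>
        e ∈ Rset n ∧ (Sym2.map Prod.snd e).IsDiag)
      ⊆ (Finset.univ.filter fun e : Sym2 (Fin n × Fin n) => e ∈ (Gcol n).edgeSet) := by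
    intro e he
    simp only [Finset.mem_filter, Finset.mem_univ, true_and, mem_edgeSet_gcol] at *
    exact ⟨he.1.1, he.2⟩
  have hle1 := Finset.card_le_card hsub
  have hle2 := Finset.card_le_card hsubcol
  rw [card_nondiag, card_edges_R hn] at hle1
  rw [card_edges_gcol (by omega : 1 ≤ n), card_edges_Rcol hn] at hle2
  rw [wsum, sum_wt, hFGRcol, hFGR, Finset.card_sdiff_of_subset hsub, Finset.card_sdiff_of_subset hsubcol,
    card_nondiag, card_edges_R hn, card_edges_gcol (by omega : 1 ≤ n), card_edges_Rcol hn,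
    wR_sum ε hn]
  rw [Nat.cast_sub hle1, Nat.cast_sub hle2]
  push_cast
  ring

-- ### limits
lemma tendsto_aux (f : ℕ → ℝ) (F : ℝ → ℝ) (hF : ContinuousAt F 0) (h0 : F 0 = 1)
    (h : ∀ᶠ n : ℕ in Filter.atTop, f n = F (1 / (n : ℝ))) :
    Filter.Tendsto f Filter.atTop (nhds 1) := by
  have h1 : Filter.Tendsto (fun n : ℕ => F (1 / (n : ℝ))) Filter.atTop (nhds 1) := by
    have := hF.tendsto.comp tendsto_one_div_atTop_nhds_zero_nat
    rwa [h0] at this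
  exact h1.congr' (by filter_upwards [h] with n hn using hn.symm)

lemma natcast_ne (n : ℕ) (hn : 2 ≤ n) : ((n : ℝ) ≠ 0) ∧ ((n : ℝ) - 1 ≠ 0) := by
  have h2 : (2 : ℝ) ≤ (n : ℝ) := by exact_mod_cast hn
  constructor <;> intro h <;> linarith

lemma limit1 (ε : ℝ) (hε : 0 < ε) :
    Filter.Tendsto (fun n : ℕ => ((n : ℝ) * (n.choose 2 : ℝ) * (1 + ε)) /
      ((n : ℝ) ^ 3 * (1 + ε) / 2)) Filter.atTop (nhds 1) := by
  have hε1 : (1 : ℝ) + ε ≠ 0 := by linarith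
  apply tendsto_aux _ (fun x => 1 - x)
  · fun_prop
  · norm_num
  · filter_upwards [Filter.eventually_ge_atTop 2] with n hn
    obtain ⟨ha, ha1⟩ := natcast_ne n hn
    rw [Nat.cast_choose_two]
    field_simp

lemma limit2 (ε : ℝ) (hε : 0 < ε) :
    Filter.Tendsto (fun n : ℕ => wR ε n / (n : ℝ) ^ 3) Filter.atTop (nhds 1) := by
  apply tendsto_aux _
    (fun x => x * (1 - x) * (1 - 2 * x) / 2 + (1 - x) * (1 - x + x ^ 2) + ε * x * (1 - x) ^ 2)
  · fun_prop
  · norm_num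
  · filter_upwards [Filter.eventually_ge_atTop 2] with n hn
    obtain ⟨ha, ha1⟩ := natcast_ne n hn
    rw [wR_closed ε hn, Nat.cast_choose_two, Nat.cast_sub (by omega : 1 ≤ n), Nat.cast_one]
    field_simp
    ring

lemma limit3 (ε : ℝ) (hε : 0 < ε) :
    Filter.Tendsto (fun n : ℕ => wsum ε (GR n) / ((n : ℝ) ^ 4 / 2)) Filter.atTop (nhds 1) := by
  apply tendsto_aux _
    (fun x => (1 - x ^ 2) + ε * x * (1 - x)
      - 2 * x * (x * (1 - x) * (1 - 2 * x) / 2 + (1 - x) * (1 - x + x ^ 2) + ε * x * (1 - x) ^ 2))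
  · fun_prop
  · norm_num
  · filter_upwards [Filter.eventually_ge_atTop 2] with n hn
    obtain ⟨ha, ha1⟩ := natcast_ne n hn
    rw [wsum_GR ε hn, wR_closed ε hn, Nat.cast_choose_two, Nat.cast_choose_two, Nat.cast_choose_two,
      Nat.cast_sub (by omega : 1 ≤ n), Nat.cast_one, Nat.cast_pow]
    field_simp
    ring

lemma limit4 (ε : ℝ) (hε : 0 < ε) :
    Filter.Tendsto (fun n : ℕ => (wsum ε (GR n) / ((n : ℝ) * (n.choose 2 : ℝ) * (1 + ε))) /
      ((n : ℝ) / (1 + ε))) Filter.atTop (nhds 1) := by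
  have hε1 : (1 : ℝ) + ε ≠ 0 := by linarith
  apply tendsto_aux _
    (fun x => ((1 - x ^ 2) + ε * x * (1 - x)
      - 2 * x * (x * (1 - x) * (1 - 2 * x) / 2 + (1 - x) * (1 - x + x ^ 2) + ε * x * (1 - x) ^ 2))
      / (1 - x))
  · exact ContinuousAt.div (Continuous.continuousAt (by fun_prop))
      (Continuous.continuousAt (by fun_prop)) (by norm_num)
  · norm_num
  · filter_upwards [Filter.eventually_ge_atTop 2] with n hn
    obtain ⟨ha, ha1⟩ := natcast_ne n hn
    rw [wsum_GR ε hn, wR_closed ε hn, Nat.cast_choose_two, Nat.cast_choose_two, Nat.cast_choose_two,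
      Nat.cast_sub (by omega : 1 ≤ n), Nat.cast_one, Nat.cast_pow]
    field_simp
    ring

/-- **Example (the greedy algorithm is no approximation algorithm).** On `K_{n²}` with
weights `1 + ε` on same-column pairs and `1` otherwise, and `S` the first row: the
edge-first greedy algorithm (processing the edges in any decreasing-weight order) returns
exactly the union of the `n` column cliques, of total weight `n·binom(n,2)·(1+ε) ∼ n³(1+ε)/2`,
while removing all edges `R` incident to `S ∖ {v_{1,1}}` is a valid solution with
`w(R) = binom(n−1,2) + (n−1)(n²−(n−1)) + (n−1)²ε ∼ n³` and retained weight
`binom(n²,2) + binom(n,2)nε − w(R) ∼ n⁴/2`; so the valid solution retains a factor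
`∼ n/(1+ε)` more weight than the greedy one. -/
theorem greedy_not_approximation (ε : ℝ) (hε : 0 < ε) :
    -- (i) the greedy algorithm returns exactly the column cliques
    (∀ n : ℕ, 2 ≤ n → ∀ l : List (Sym2 (Fin n × Fin n)),
      l.Nodup → (∀ e, e ∈ l ↔ ¬ e.IsDiag) →
      l.Pairwise (fun e₁ e₂ => wt ε e₂ ≤ wt ε e₁) →
      hatList (Srow n) l = Gcol n ∧
      wsum ε (hatList (Srow n) l) = (n : ℝ) * (n.choose 2 : ℝ) * (1 + ε)) ∧
    Tendsto (fun n : ℕ => ((n : ℝ) * (n.choose 2 : ℝ) * (1 + ε)) /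
      ((n : ℝ) ^ 3 * (1 + ε) / 2)) atTop (nhds 1) ∧
    -- (ii) removing `R` is a valid solution and its weights
    (∀ n : ℕ, 2 ≤ n →
      (∀ a ∈ Srow n, ∀ b ∈ Srow n, a ≠ b → ¬ (GR n).Reachable a b) ∧
      wR ε n = ((n - 1).choose 2 : ℝ) + ((n : ℝ) - 1) * ((n : ℝ) ^ 2 - ((n : ℝ) - 1)) +
        ((n : ℝ) - 1) ^ 2 * ε ∧
      wsum ε (GR n) = ((n ^ 2).choose 2 : ℝ) + (n.choose 2 : ℝ) * (n : ℝ) * ε - wR ε n) ∧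
    Tendsto (fun n : ℕ => wR ε n / (n : ℝ) ^ 3) atTop (nhds 1) ∧
    Tendsto (fun n : ℕ => wsum ε (GR n) / ((n : ℝ) ^ 4 / 2)) atTop (nhds 1) ∧
    -- consequently the ratio of retained weights is asymptotic to `n/(1+ε)`
    Tendsto (fun n : ℕ => (wsum ε (GR n) / ((n : ℝ) * (n.choose 2 : ℝ) * (1 + ε))) /
      ((n : ℝ) / (1 + ε))) atTop (nhds 1) := by
  have hε1 : (1 : ℝ) + ε ≠ 0 := by linarith
  refine ⟨?_, ?_, ?_, ?_, ?_, ?_⟩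
  · intro n hn l _hnodup hmem hsort
    have hG := greedy_result hε hn l hmem hsort
    exact ⟨hG, by rw [hG, wsum_Gcol ε hn]⟩
  · exact limit1 ε hε
  · intro n hn
    exact ⟨GR_valid hn, wR_closed ε hn, wsum_GR ε hn⟩
  · exact limit2 ε hε
  · exact limit3 ε hε
  · exact limit4 ε hε

end
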